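/- Let a, b be real numbers and n a nonnegative integer such that 2i+(−1)^{n+1}+2−2a ≠ 0 for all 0 ≤ i ≤ ⌊n/2⌋−1 and (a+b−n+1/2)_k ≠ 0 for all 0 ≤ k ≤ ⌊n/2⌋. Then S_n(1, 1, −2a−2b+2, −2a; x) = K_n · A_n^{(a,b)}(x) for all real x, where K_n = ∏_{i=0}^{⌊n/2⌋−1} (2i+2⌊n/2⌋+(−1)^{n+1}+2−2a−2b) / (2i+(−1)^{n+1}+2−2a) is the leading coefficient of S_n(1, 1, −2a−2b+2, −2a; x). Equivalently, the monic normalization of S_n(1, 1, −2a−2b+2, −2a; x) has the hypergeometric form x^n · ₂F₁(−⌊n/2⌋, a+1/2−⌊(n+1)/2⌋; a+b−n+1/2; −1/x²) = A_n^{(a,b)}(x). -/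

import Mathlib

open Real Finset

noncomputable section

/-- Pochhammer symbol `(r)_k = r (r+1) ⋯ (r+k-1)`. -/
def poch (r : ℝ) (k : ℕ) : ℝ := ∏ i ∈ Finset.range k, (r + i)

/-- The basic class of symmetric polynomials `S_n(p,q,r,s; x)`. -/
def S (p q r s : ℝ) (n : ℕ) (x : ℝ) : ℝ :=
  ∑ k ∈ Finset.range (n / 2 + 1),
    ((n / 2).choose k : ℝ) *
      (∏ i ∈ Finset.range (n / 2 - k),
        ((2 * (i : ℝ) + (-1) ^ (n + 1) + 2 * ((n / 2 : ℕ) : ℝ)) * p + r) /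
          ((2 * (i : ℝ) + (-1) ^ (n + 1) + 2) * q + s)) *
      x ^ (n - 2 * k)

/-- The monic polynomial `A_n^{(a,b)}(x)`. -/
def A (a b : ℝ) (n : ℕ) (x : ℝ) : ℝ :=
  ∑ k ∈ Finset.range (n / 2 + 1),
    poch (-(n / 2 : ℕ) : ℝ) k * poch (a + 1/2 - ((n + 1) / 2 : ℕ)) k * (-1) ^ k /
      (poch (a + b - n + 1/2) k * (Nat.factorial k)) * x ^ (n - 2 * k)

theorem S_eq_leadingCoeff_mul_A (a b : ℝ) (n : ℕ)
    (h1 : ∀ i : ℕ, i < n / 2 → 2 * (i : ℝ) + (-1) ^ (n + 1) + 2 - 2 * a ≠ 0)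
    (h2 : ∀ k ≤ n / 2, poch (a + b - n + 1/2) k ≠ 0) (x : ℝ) :
    S 1 1 (-2 * a - 2 * b + 2) (-2 * a) n x =
      (∏ i ∈ Finset.range (n / 2),
        (2 * (i : ℝ) + 2 * ((n / 2 : ℕ) : ℝ) + (-1) ^ (n + 1) + 2 - 2 * a - 2 * b) /
          (2 * (i : ℝ) + (-1) ^ (n + 1) + 2 - 2 * a)) * A a b n x := by
  set m := n / 2 with hm
  set M : ℝ := (m : ℝ) with hM
  set M2 : ℝ := (((n + 1) / 2 : ℕ) : ℝ) with hM2
  have hE : ((-1 : ℝ)) ^ (n + 1) = 2 * M2 - 2 * M - 1 := by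
    obtain ⟨r, hn | hn⟩ := Nat.even_or_odd' n
    · have e1 : m = r := by omega
      have e2 : (n + 1) / 2 = r := by omega
      have e3 : ((-1 : ℝ)) ^ (n + 1) = -1 := Odd.neg_one_pow ⟨r, by omega⟩
      rw [e3, hM2, hM, e1, e2]; ring
    · have e1 : m = r := by omega
      have e2 : (n + 1) / 2 = r + 1 := by omega
      have e3 : ((-1 : ℝ)) ^ (n + 1) = 1 := Even.neg_one_pow ⟨r + 1, by omega⟩
      rw [e3, hM2, hM, e1, e2]; push_cast; ring
  have hncast : (n : ℝ) = M + M2 := by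
    obtain ⟨r, hn | hn⟩ := Nat.even_or_odd' n
    · have e1 : m = r := by omega
      have e2 : (n + 1) / 2 = r := by omega
      rw [hM2, hM, e1, e2, hn]; push_cast; ring
    · have e1 : m = r := by omega
      have e2 : (n + 1) / 2 = r + 1 := by omega
      rw [hM2, hM, e1, e2, hn]; push_cast; ring
  set c : ℝ := a + 1/2 - M2 with hc
  set d : ℝ := a + b - n + 1/2 with hd
  set f : ℕ → ℝ := fun i => (2 * (i : ℝ) + 2 * M + (-1) ^ (n + 1) + 2 - 2 * a - 2 * b) /
      (2 * (i : ℝ) + (-1) ^ (n + 1) + 2 - 2 * a) with hf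
  unfold S A
  rw [Finset.mul_sum]
  simp only [← hm, ← hM, ← hM2]
  refine Finset.sum_congr rfl fun k hk => ?_
  have hk' : k ≤ m := by
    have := Finset.mem_range.mp hk; omega
  -- nonzeroness facts
  have hcne : poch c k ≠ 0 := by
    rw [poch]
    rw [Finset.prod_ne_zero_iff]
    intro j hj
    have hjk : j < k := Finset.mem_range.mp hj
    have hjm : m - 1 - j < m := by omega
    have hD := h1 (m - 1 - j) hjm
    intro h0
    apply hD
    have hcast : ((m - 1 - j : ℕ) : ℝ) = M - 1 - j := by
      have : (m - 1 - j : ℕ) = m - (1 + j) := by omega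
      rw [this, Nat.cast_sub (by omega)]
      push_cast; ring
    rw [hcast, hE]
    have : c + j = 0 := h0
    rw [hc] at this
    linarith
  have hdne : poch d k ≠ 0 := h2 k hk'
  have hkfac : (k.factorial : ℝ) ≠ 0 := by positivity
  -- product split and reindexing
  have hsplit : ∏ i ∈ Finset.range m, f i =
      (∏ i ∈ Finset.range (m - k), f i) * ∏ j ∈ Finset.range k, f (m - k + j) := by
    conv_lhs => rw [show m = (m - k) + k from (Nat.sub_add_cancel hk').symm]
    exact Finset.prod_range_add f (m - k) k
  have hcastmk : ((m - k : ℕ) : ℝ) = M - k := by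
    rw [Nat.cast_sub hk']
  have hrevcast : ∀ j < k, ((k - 1 - j : ℕ) : ℝ) = (k : ℝ) - 1 - j := by
    intro j hj
    have : (k - 1 - j : ℕ) = k - (1 + j) := by omega
    rw [this, Nat.cast_sub (by omega)]
    push_cast; ring
  have hN : ∏ j ∈ Finset.range k, (2 * ((m - k + j : ℕ) : ℝ) + 2 * M + (-1) ^ (n + 1) + 2 - 2 * a - 2 * b)
      = (-2) ^ k * poch d k := by
    calc ∏ j ∈ Finset.range k, (2 * ((m - k + j : ℕ) : ℝ) + 2 * M + (-1) ^ (n + 1) + 2 - 2 * a - 2 * b)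
        = ∏ j ∈ Finset.range k, ((-2) * (d + ((k - 1 - j : ℕ) : ℝ))) := by
          refine Finset.prod_congr rfl fun j hj => ?_
          have hjk : j < k := Finset.mem_range.mp hj
          rw [hrevcast j hjk]
          push_cast [hcastmk]
          rw [hE, hd, hncast]; ring
      _ = (-2) ^ k * ∏ j ∈ Finset.range k, (d + ((k - 1 - j : ℕ) : ℝ)) := by
          rw [Finset.prod_mul_distrib, Finset.prod_const, Finset.card_range]
      _ = (-2) ^ k * poch d k := by
          rw [poch, Finset.prod_range_reflect (fun j => d + (j : ℝ)) k]
  have hD : ∏ j ∈ Finset.range k, (2 * ((m - k + j : ℕ) : ℝ) + (-1) ^ (n + 1) + 2 - 2 * a)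
      = (-2) ^ k * poch c k := by
    calc ∏ j ∈ Finset.range k, (2 * ((m - k + j : ℕ) : ℝ) + (-1) ^ (n + 1) + 2 - 2 * a)
        = ∏ j ∈ Finset.range k, ((-2) * (c + ((k - 1 - j : ℕ) : ℝ))) := by
          refine Finset.prod_congr rfl fun j hj => ?_
          have hjk : j < k := Finset.mem_range.mp hj
          rw [hrevcast j hjk]
          push_cast [hcastmk]
          rw [hE, hc]; ring
      _ = (-2) ^ k * ∏ j ∈ Finset.range k, (c + ((k - 1 - j : ℕ) : ℝ)) := by
          rw [Finset.prod_mul_distrib, Finset.prod_const, Finset.card_range]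
      _ = (-2) ^ k * poch c k := by
          rw [poch, Finset.prod_range_reflect (fun j => c + (j : ℝ)) k]
  have hfr : ∏ j ∈ Finset.range k, f (m - k + j) = poch d k / poch c k := by
    rw [hf]
    simp only []
    rw [Finset.prod_div_distrib, hN, hD, mul_div_mul_left _ _ (by positivity : ((-2 : ℝ)) ^ k ≠ 0)]
  -- choose identity
  have hchoose : poch (-M) k * (-1) ^ k = (m.choose k : ℝ) * k.factorial := by
    have e1 : poch (-M) k * (-1) ^ k = ∏ j ∈ Finset.range k, (M - (j : ℝ)) := by
      rw [poch, show ((-1 : ℝ)) ^ k = ∏ _j ∈ Finset.range k, (-1 : ℝ) by simp,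
        ← Finset.prod_mul_distrib]
      exact Finset.prod_congr rfl fun j _ => by ring
    have e2 : ∏ j ∈ Finset.range k, (M - (j : ℝ)) = ((m.descFactorial k : ℕ) : ℝ) := by
      rw [Nat.descFactorial_eq_prod_range, Nat.cast_prod]
      refine Finset.prod_congr rfl fun j hj => ?_
      have hjm : j ≤ m := by have := Finset.mem_range.mp hj; omega
      rw [Nat.cast_sub hjm, hM]
    rw [e1, e2, Nat.descFactorial_eq_factorial_mul_choose]
    push_cast; ring
  have hscalar : poch d k / poch c k *
      (poch (-M) k * poch c k * (-1) ^ k / (poch d k * (k.factorial : ℝ))) = (m.choose k : ℝ) := by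
    field_simp
    linear_combination hchoose
  have hLprod : (∏ i ∈ Finset.range (m - k),
      ((2 * (i : ℝ) + (-1) ^ (n + 1) + 2 * M) * 1 + (-2 * a - 2 * b + 2)) /
        ((2 * (i : ℝ) + (-1) ^ (n + 1) + 2) * 1 + -2 * a)) = ∏ i ∈ Finset.range (m - k), f i := by
    refine Finset.prod_congr rfl fun i _ => ?_
    rw [hf]; ring
  have hKprod : (∏ i ∈ Finset.range m,
      (2 * (i : ℝ) + 2 * M + (-1) ^ (n + 1) + 2 - 2 * a - 2 * b) /
        (2 * (i : ℝ) + (-1) ^ (n + 1) + 2 - 2 * a)) = ∏ i ∈ Finset.range m, f i := by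
    refine Finset.prod_congr rfl fun i _ => ?_
    rw [hf]
  rw [hLprod, hKprod, hsplit, hfr]
  rw [← hscalar]
  ring
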